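/- Let G be a simple graph on a vertex type V. Define a simple graph G' on V ⊕ (V × V) by: inl u is adjacent to inl v iff G.Adj u v; inl w is adjacent to inr (u, v) iff u ≠ v, G.Reachable u v, and (w = u or w = v); and no vertex inr (u,v) is adjacent to another inr-vertex. Then: (1) for all u v : V, G'.Reachable (inl u) (inl v) if and only if G.Reachable u v; and (2) if G.Reachable u v with u ≠ v, then there is a walk in G' from inl u to inl v of length at most 2. -/

import Mathlib

open SimpleGraph

/-- The transitive-closure-collapsing graph `G'` on `V ⊕ (V × V)`. -/
def adj' {V : Type*} (G : SimpleGraph V) : (V ⊕ V × V) → (V ⊕ V × V) → Prop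
  | .inl u, .inl v => G.Adj u v
  | .inl w, .inr (u, v) => u ≠ v ∧ G.Reachable u v ∧ (w = u ∨ w = v)
  | .inr (u, v), .inl w => u ≠ v ∧ G.Reachable u v ∧ (w = u ∨ w = v)
  | .inr _, .inr _ => False

def G' {V : Type*} (G : SimpleGraph V) : SimpleGraph (V ⊕ V × V) where
  Adj := adj' G
  symm := by
    refine ⟨fun a b h => ?_⟩
    rcases a with u | ⟨u, v⟩ <;> rcases b with w | ⟨w, z⟩ <;>
      simp only [adj'] at h ⊢
    · exact h.symm
    · exact h
    · exact h
  loopless := by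
    refine ⟨fun a h => ?_⟩
    rcases a with u | ⟨u, v⟩ <;> simp only [adj'] at h
    exact (G.ne_of_adj h) rfl

/-- `G'` preserves reachability between original vertices, and within
a connected component the distance collapses to at most 2. -/

def reprV {V : Type*} : (V ⊕ V × V) → V
  | .inl u => u
  | .inr (u, _) => u

lemma adj'_reach {V : Type*} (G : SimpleGraph V) {a b : V ⊕ V × V}
    (h : (G' G).Adj a b) : G.Reachable (reprV a) (reprV b) := by
  rcases a with u | ⟨u, v⟩ <;> rcases b with w | ⟨w, z⟩ <;>
    simp only [G', adj', reprV] at h ⊢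
  · exact h.reachable
  · rcases h.2.2 with rfl | rfl
    · rfl
    · exact h.2.1.symm
  · rcases h.2.2 with rfl | rfl
    · rfl
    · exact h.2.1

lemma reach_of_reach' {V : Type*} (G : SimpleGraph V) {a b : V ⊕ V × V}
    (h : (G' G).Reachable a b) : G.Reachable (reprV a) (reprV b) := by
  obtain ⟨w⟩ := h
  induction w with
  | nil => rfl
  | cons h _ ih => exact (adj'_reach G h).trans ih

theorem stmt_10 {V : Type*} (G : SimpleGraph V) :
    (∀ u v : V, (G' G).Reachable (Sum.inl u) (Sum.inl v) ↔ G.Reachable u v) ∧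
    (∀ u v : V, G.Reachable u v → u ≠ v →
      ∃ w : (G' G).Walk (Sum.inl u) (Sum.inl v), w.length ≤ 2) := by
  constructor
  · intro u v
    constructor
    · intro h
      exact reach_of_reach' G h
    · intro h
      rcases eq_or_ne u v with rfl | hne
      · rfl
      · have h1 : (G' G).Adj (Sum.inl u) (Sum.inr (u, v)) := ⟨hne, h, Or.inl rfl⟩
        have h2 : (G' G).Adj (Sum.inr (u, v)) (Sum.inl v) := ⟨hne, h, Or.inr rfl⟩
        exact (h1.reachable).trans h2.reachable
  · intro u v h hne
    have h1 : (G' G).Adj (Sum.inl u) (Sum.inr (u, v)) := ⟨hne, h, Or.inl rfl⟩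
    have h2 : (G' G).Adj (Sum.inr (u, v)) (Sum.inl v) := ⟨hne, h, Or.inr rfl⟩
    exact ⟨h1.toWalk.append h2.toWalk, by simp⟩
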